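/- Let −1/2 < ν < 1, 0 ≤ θ ≤ 1, δ > 0, and let Θ₁, Θ₂, Θ₃, T_int be positive reals. Set T_tr = (Θ₁+Θ₂+Θ₃)/3, T_δ = (3·T_tr + δ·T_int)/(3+δ), and T_θ = θ·T_δ + (1−θ)·T_int. Then Σᵢ ln((1−θ)·((1−ν)·T_tr + ν·Θᵢ) + θ·T_δ) + δ·ln(T_θ) − (3+δ)·ln(T_δ) ≥ (1−θ)·(ln(Θ₁Θ₂Θ₃) + δ·ln(T_int) − (3+δ)·ln(T_δ)). -/
import Mathlib

lemma log_weighted2 {w₁ w₂ p₁ p₂ : ℝ} (hw₁ : 0 ≤ w₁) (hw₂ : 0 ≤ w₂)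
    (hp₁ : 0 < p₁) (hp₂ : 0 < p₂) (hw : w₁ + w₂ = 1) :
    w₁ * Real.log p₁ + w₂ * Real.log p₂ ≤ Real.log (w₁ * p₁ + w₂ * p₂) := by
  have h := Real.geom_mean_le_arith_mean2_weighted hw₁ hw₂ hp₁.le hp₂.le hw
  have hpos : (0:ℝ) < p₁ ^ w₁ * p₂ ^ w₂ := by positivity
  have := Real.log_le_log hpos h
  rwa [Real.log_mul (by positivity) (by positivity),
    Real.log_rpow hp₁, Real.log_rpow hp₂] at this

lemma log_weighted3 {w₁ w₂ w₃ p₁ p₂ p₃ : ℝ} (hw₁ : 0 ≤ w₁) (hw₂ : 0 ≤ w₂)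
    (hw₃ : 0 ≤ w₃) (hp₁ : 0 < p₁) (hp₂ : 0 < p₂) (hp₃ : 0 < p₃)
    (hw : w₁ + w₂ + w₃ = 1) :
    w₁ * Real.log p₁ + w₂ * Real.log p₂ + w₃ * Real.log p₃ ≤
      Real.log (w₁ * p₁ + w₂ * p₂ + w₃ * p₃) := by
  have h := Real.geom_mean_le_arith_mean3_weighted hw₁ hw₂ hw₃ hp₁.le hp₂.le hp₃.le hw
  have hpos : (0:ℝ) < p₁ ^ w₁ * p₂ ^ w₂ * p₃ ^ w₃ := by positivity
  have := Real.log_le_log hpos h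
  rwa [Real.log_mul (by positivity) (by positivity),
    Real.log_mul (by positivity) (by positivity),
    Real.log_rpow hp₁, Real.log_rpow hp₂, Real.log_rpow hp₃] at this

theorem entropy_comparison_lemma (θ ν δ T_int : ℝ) (Θ : Fin 3 → ℝ)
    (hν0 : -1/2 < ν) (hν1 : ν < 1) (hθ0 : 0 ≤ θ) (hθ1 : θ ≤ 1) (hδ : 0 < δ)
    (hΘ : ∀ i, 0 < Θ i) (hint : 0 < T_int)
    (T_tr T_δ T_θ : ℝ)
    (htr : T_tr = (Θ 0 + Θ 1 + Θ 2) / 3)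
    (hTδ : T_δ = (3 * T_tr + δ * T_int) / (3 + δ))
    (hTθ : T_θ = θ * T_δ + (1 - θ) * T_int) :
    ∑ i : Fin 3, Real.log ((1 - θ) * ((1 - ν) * T_tr + ν * Θ i) + θ * T_δ)
      + δ * Real.log T_θ - (3 + δ) * Real.log T_δ ≥
    (1 - θ) * (Real.log (Θ 0 * Θ 1 * Θ 2) + δ * Real.log T_int
      - (3 + δ) * Real.log T_δ) := by
  have h0 := hΘ 0
  have h1 := hΘ 1
  have h2 := hΘ 2
  have htrpos : 0 < T_tr := by rw [htr]; positivity
  have hTδpos : 0 < T_δ := by rw [hTδ]; positivity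
  -- weights for the ν-combination
  have hwa : (0:ℝ) ≤ (1 + 2*ν)/3 := by linarith
  have hwb : (0:ℝ) ≤ (1 - ν)/3 := by linarith
  have hwsum : (1 + 2*ν)/3 + (1 - ν)/3 + (1 - ν)/3 = 1 := by ring
  -- each a_i is a convex combination of the Θ's
  have key : ∀ i j k : Fin 3, Θ i + Θ j + Θ k = Θ 0 + Θ 1 + Θ 2 →
      (1 + 2*ν)/3 * Real.log (Θ i) + (1 - ν)/3 * Real.log (Θ j)
        + (1 - ν)/3 * Real.log (Θ k) ≤
        Real.log ((1 - ν) * T_tr + ν * Θ i) := by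
    intro i j k hsum
    have h := log_weighted3 hwa hwb hwb (hΘ i) (hΘ j) (hΘ k) hwsum
    have harg : (1 + 2*ν)/3 * Θ i + (1 - ν)/3 * Θ j + (1 - ν)/3 * Θ k
        = (1 - ν) * T_tr + ν * Θ i := by
      rw [htr, ← hsum]; ring
    rwa [harg] at h
  have k0 := key 0 1 2 rfl
  have k1 := key 1 2 0 (by ring)
  have k2 := key 2 0 1 (by ring)
  have hlogsum : Real.log (Θ 0) + Real.log (Θ 1) + Real.log (Θ 2) ≤
      Real.log ((1 - ν) * T_tr + ν * Θ 0) + Real.log ((1 - ν) * T_tr + ν * Θ 1)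
      + Real.log ((1 - ν) * T_tr + ν * Θ 2) := by linarith
  -- positivity of a_i
  have hΘlt : ∀ i : Fin 3, Θ i < 3 * T_tr := by
    intro i
    have hcase : Θ i = Θ 0 ∨ Θ i = Θ 1 ∨ Θ i = Θ 2 := by fin_cases i <;> simp
    rcases hcase with h | h | h <;> rw [h, htr] <;> linarith
  have hapos : ∀ i : Fin 3, 0 < (1 - ν) * T_tr + ν * Θ i := by
    intro i
    rcases le_or_gt 0 ν with h | h
    · nlinarith [mul_nonneg h (hΘ i).le, mul_pos (by linarith : (0:ℝ) < 1 - ν) htrpos]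
    · have h3 := mul_lt_mul_of_neg_left (hΘlt i) h
      nlinarith [mul_pos (by linarith : (0:ℝ) < 1 + 2*ν) htrpos]
  have hTθpos : 0 < T_θ := by
    rw [hTθ]
    rcases hθ0.eq_or_lt with h | h
    · rw [← h]; nlinarith
    · have h4 := mul_pos h hTδpos
      have h5 := mul_nonneg (by linarith : (0:ℝ) ≤ 1 - θ) hint.le
      linarith
  -- θ-concavity for each a_i
  have hcomb : ∀ i : Fin 3,
      (1 - θ) * Real.log ((1 - ν) * T_tr + ν * Θ i) + θ * Real.log T_δ ≤
        Real.log ((1 - θ) * ((1 - ν) * T_tr + ν * Θ i) + θ * T_δ) := by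
    intro i
    exact log_weighted2 (by linarith) hθ0 (hapos i) hTδpos (by ring)
  have hc0 := hcomb 0
  have hc1 := hcomb 1
  have hc2 := hcomb 2
  -- θ-concavity for T_θ
  have hcθ : θ * Real.log T_δ + (1 - θ) * Real.log T_int ≤ Real.log T_θ := by
    rw [hTθ]
    exact log_weighted2 hθ0 (by linarith) hTδpos hint (by ring)
  rw [Fin.sum_univ_three,
    Real.log_mul (by positivity) h2.ne', Real.log_mul h0.ne' h1.ne']
  have hmul : (1 - θ) * (Real.log (Θ 0) + Real.log (Θ 1) + Real.log (Θ 2)) ≤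
      (1 - θ) * (Real.log ((1 - ν) * T_tr + ν * Θ 0)
        + Real.log ((1 - ν) * T_tr + ν * Θ 1)
        + Real.log ((1 - ν) * T_tr + ν * Θ 2)) :=
    mul_le_mul_of_nonneg_left hlogsum (by linarith)
  have hδθ := mul_le_mul_of_nonneg_left hcθ hδ.le
  linarith
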